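/- Let f : Matrix (Fin 3) (Fin 3) ℝ → ℝ be differentiable at R. Then the derivative at t = 0 of t ↦ f(R·exp(t·S(a))) equals tr((∂f/∂R)(R) · R · S(a)), where ∂f/∂R is the matrix of partial derivatives (∂f/∂rᵢⱼ)ᵢⱼ arranged so that the trace formula holds. -/

import Mathlib

open Matrix

attribute [local instance] Matrix.frobeniusNormedAddCommGroup Matrix.frobeniusNormedRing
  Matrix.frobeniusNormedSpace

attribute [local instance] Matrix.frobeniusNormedAlgebra

/-- The cross-product (skew-symmetric) matrix of a vector in `ℝ³`. -/
def S (ω : Fin 3 → ℝ) : Matrix (Fin 3) (Fin 3) ℝ :=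
  !![0, -ω 2, ω 1; ω 2, 0, -ω 0; -ω 1, ω 0, 0]

/-- The scalar-by-matrix derivative `∂f/∂R`, arranged so that the trace formula holds:
`(∂f/∂R) i j` is the partial derivative of `f` with respect to the entry `r j i`. -/
noncomputable def matDeriv (f : Matrix (Fin 3) (Fin 3) ℝ → ℝ)
    (R : Matrix (Fin 3) (Fin 3) ℝ) : Matrix (Fin 3) (Fin 3) ℝ :=
  fun i j => fderiv ℝ f R (Matrix.single j i 1)

lemma fderiv_eq_trace (f : Matrix (Fin 3) (Fin 3) ℝ → ℝ)
    (R M : Matrix (Fin 3) (Fin 3) ℝ) :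
    fderiv ℝ f R M = (matDeriv f R * M).trace := by
  have hM := matrix_eq_sum_single M
  calc fderiv ℝ f R M = fderiv ℝ f R (∑ i, ∑ j, single i j (M i j)) := by rw [← hM]
    _ = ∑ i, ∑ j, M i j * fderiv ℝ f R (single i j 1) := by
        rw [map_sum]
        refine Finset.sum_congr rfl fun i _ => ?_
        rw [map_sum]
        refine Finset.sum_congr rfl fun j _ => ?_
        have : (single i j (M i j) : Matrix (Fin 3) (Fin 3) ℝ)
            = M i j • single i j 1 := by
          ext a b; simp [single, smul_ite]
        rw [this, (fderiv ℝ f R).map_smul, smul_eq_mul]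
    _ = (matDeriv f R * M).trace := by
        rw [Matrix.trace]
        simp only [Matrix.diag, Matrix.mul_apply, matDeriv]
        rw [Finset.sum_comm]
        refine Finset.sum_congr rfl fun i _ => Finset.sum_congr rfl fun j _ => ?_
        ring

theorem lie_derivative_trace_formula (f : Matrix (Fin 3) (Fin 3) ℝ → ℝ)
    (R : Matrix (Fin 3) (Fin 3) ℝ) (a : Fin 3 → ℝ)
    (hf : DifferentiableAt ℝ f R) :
    HasDerivAt (fun t : ℝ => f (R * NormedSpace.exp (t • S a)))
      ((matDeriv f R * (R * S a)).trace) 0 := by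
  have h1 : HasDerivAt (fun t : ℝ => NormedSpace.exp (t • S a)) (S a) 0 := by
    have := hasDerivAt_exp_smul_const (𝕂 := ℝ) (S a) (0 : ℝ)
    rw [zero_smul, NormedSpace.exp_zero, one_mul] at this
    exact this
  have h2 : HasDerivAt (fun t : ℝ => R * NormedSpace.exp (t • S a)) (R * S a) 0 :=
    h1.const_mul R
  have h3 : (fun t : ℝ => R * NormedSpace.exp (t • S a)) 0 = R := by simp
  have h4 := (h3 ▸ hf).hasFDerivAt.comp_hasDerivAt 0 h2
  rw [← fderiv_eq_trace]
  simp only [Function.comp_def] at h4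
  rw [zero_smul, NormedSpace.exp_zero, mul_one] at h4
  exact h4
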